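/- Let G be a graph with no isolated vertices such that γ_R(G) = 2β(G), where β(G) is the vertex covering number. Then b_R(G) ≥ δ(G), the minimum degree of G. -/

import Mathlib

open SimpleGraph Finset

/-- A Roman dominating function: values in {0,1,2}, every 0-vertex has a neighbor with value 2. -/
def IsRDF {V : Type*} (G : SimpleGraph V) (f : V → ℕ) : Prop :=
  (∀ v, f v ≤ 2) ∧ ∀ v, f v = 0 → ∃ u, G.Adj v u ∧ f u = 2

/-- The Roman domination number: minimum weight of a Roman dominating function. -/
noncomputable def romanDom {V : Type*} [Fintype V] (G : SimpleGraph V) : ℕ :=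
  sInf {k | ∃ f : V → ℕ, IsRDF G f ∧ ∑ v, f v = k}

/-- A dominating set. -/
def IsDomSet {V : Type*} (G : SimpleGraph V) (S : Set V) : Prop :=
  ∀ v, v ∈ S ∨ ∃ u ∈ S, G.Adj u v

/-- The domination number. -/
noncomputable def domNum {V : Type*} [Fintype V] (G : SimpleGraph V) : ℕ :=
  sInf {k | ∃ S : Set V, IsDomSet G S ∧ S.ncard = k}

/-- Degree of a vertex. -/
noncomputable def deg {V : Type*} (G : SimpleGraph V) (v : V) : ℕ :=
  (G.neighborSet v).ncard

/-- Maximum degree. -/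
noncomputable def maxDeg {V : Type*} (G : SimpleGraph V) : ℕ :=
  sSup {d | ∃ v, deg G v = d}

/-- Minimum degree. -/
noncomputable def minDeg {V : Type*} (G : SimpleGraph V) : ℕ :=
  sInf {d | ∃ v, deg G v = d}

/-- The Roman bondage number: minimum size of an edge set whose deletion increases `romanDom`. -/
noncomputable def romanBondage {V : Type*} [Fintype V] (G : SimpleGraph V) : ℕ :=
  sInf {k | ∃ B : Set (Sym2 V), B ⊆ G.edgeSet ∧
    romanDom (G.deleteEdges B) > romanDom G ∧ B.ncard = k}

/-- The bondage number: minimum size of an edge set whose deletion increases `domNum`. -/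
noncomputable def bondage {V : Type*} [Fintype V] (G : SimpleGraph V) : ℕ :=
  sInf {k | ∃ B : Set (Sym2 V), B ⊆ G.edgeSet ∧
    domNum (G.deleteEdges B) > domNum G ∧ B.ncard = k}

/-- A vertex cover. -/
def IsVC {V : Type*} (G : SimpleGraph V) (S : Set V) : Prop :=
  ∀ u v, G.Adj u v → u ∈ S ∨ v ∈ S

/-- The vertex covering number. -/
noncomputable def vcNum {V : Type*} [Fintype V] (G : SimpleGraph V) : ℕ :=
  sInf {k | ∃ S : Set V, IsVC G S ∧ S.ncard = k}


open Classical in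
lemma rdf_le_two_vc {V : Type*} [Fintype V] (H : SimpleGraph V)
    (hniso : ∀ v : V, ∃ u, H.Adj v u) : romanDom H ≤ 2 * vcNum H := by
  have hne : {k | ∃ S : Set V, IsVC H S ∧ S.ncard = k}.Nonempty :=
    ⟨(Set.univ : Set V).ncard, Set.univ, fun u v _ => Or.inl trivial, rfl⟩
  obtain ⟨S, hS, hcard⟩ := Nat.sInf_mem hne
  have : vcNum H = S.ncard := hcard.symm
  set f : V → ℕ := fun v => if v ∈ S then 2 else 0 with hf
  have hrdf : IsRDF H f := by
    constructor
    · intro v; simp only [hf]; split <;> omega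
    · intro v hv
      have hvS : v ∉ S := by
        intro h; simp [hf, h] at hv
      obtain ⟨u, hu⟩ := hniso v
      have := hS v u hu
      rcases this with h | h
      · exact absurd h hvS
      · exact ⟨u, hu, by simp [hf, h]⟩
  have hsum : ∑ v, f v = 2 * S.ncard := by
    rw [Set.ncard_eq_toFinset_card']
    have h1 : ∑ v, f v = ∑ v ∈ Finset.univ.filter (· ∈ S), 2 := by
      rw [Finset.sum_filter]
    rw [h1, Finset.sum_const, smul_eq_mul, mul_comm]
    congr 1
    apply Finset.card_bij (fun a _ => a) <;> simp
  have : romanDom H ≤ ∑ v, f v := Nat.sInf_le ⟨f, hrdf, rfl⟩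
  omega

lemma vc_delete_le {V : Type*} [Fintype V] (G : SimpleGraph V) (B : Set (Sym2 V)) :
    vcNum (G.deleteEdges B) ≤ vcNum G := by
  have hne : {k | ∃ S : Set V, IsVC G S ∧ S.ncard = k}.Nonempty :=
    ⟨(Set.univ : Set V).ncard, Set.univ, fun u v _ => Or.inl trivial, rfl⟩
  obtain ⟨S, hS, hcard⟩ := Nat.sInf_mem hne
  refine le_trans (Nat.sInf_le ⟨S, ?_, rfl⟩) hcard.le
  intro u v huv
  exact hS u v (SimpleGraph.deleteEdges_adj.1 huv).1

lemma minDeg_le_deg {V : Type*} (G : SimpleGraph V) (v : V) : minDeg G ≤ deg G v :=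
  Nat.sInf_le ⟨v, rfl⟩

theorem stmt14 {V : Type*} [Fintype V] (G : SimpleGraph V)
    (hniso : ∀ v : V, ∃ u, G.Adj v u) (hΔ : 2 ≤ maxDeg G)
    (hβ : romanDom G = 2 * vcNum G) :
    minDeg G ≤ romanBondage G := by
  classical
  -- get a vertex of degree ≥ 2
  have hDne : {d | ∃ v, deg G v = d}.Nonempty := by
    by_contra h
    rw [Set.not_nonempty_iff_eq_empty] at h
    rw [maxDeg, h] at hΔ
    rw [csSup_empty] at hΔ
    exact absurd hΔ (by norm_num)
  have hbdd : BddAbove {d | ∃ v, deg G v = d} := by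
    refine ⟨Fintype.card V, fun d hd => ?_⟩
    obtain ⟨v, rfl⟩ := hd
    exact le_trans (Set.ncard_le_ncard (Set.subset_univ _) (Set.finite_univ)) (by rw [Set.ncard_univ, Nat.card_eq_fintype_card])
  obtain ⟨v0, hv0⟩ := Nat.sSup_mem hDne hbdd
  have hv0deg : 2 ≤ deg G v0 := by rw [hv0]; exact hΔ
  -- two distinct neighbors of v0
  have h2 : 1 < (G.neighborSet v0).ncard := hv0deg
  obtain ⟨u1, u2, hu1, hu2, hu12⟩ := (Set.one_lt_ncard_iff (Set.toFinite _)).1 h2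
  -- nonemptiness of the bondage set: delete all edges
  have hTne : {k | ∃ B : Set (Sym2 V), B ⊆ G.edgeSet ∧
      romanDom (G.deleteEdges B) > romanDom G ∧ B.ncard = k}.Nonempty := by
    refine ⟨G.edgeSet.ncard, G.edgeSet, le_refl _, ?_, rfl⟩
    set n := Fintype.card V
    -- romanDom of the edgeless graph is ≥ n
    have hlow : n ≤ romanDom (G.deleteEdges G.edgeSet) := by
      have hne : {k | ∃ f : V → ℕ, IsRDF (G.deleteEdges G.edgeSet) f ∧ ∑ v, f v = k}.Nonempty := by
        refine ⟨∑ v : V, 1, fun _ => 1, ⟨fun v => by norm_num, fun v hv => by simp at hv⟩, rfl⟩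
      obtain ⟨f, hf, hsum⟩ := Nat.sInf_mem hne
      rw [romanDom, ← hsum]
      have : ∀ v, 1 ≤ f v := by
        intro v
        by_contra h
        push_neg at h
        interval_cases h' : f v
        obtain ⟨u, hu, -⟩ := hf.2 v h'
        rw [SimpleGraph.deleteEdges_adj] at hu
        exact hu.2 hu.1
      calc n = ∑ _v : V, 1 := by simp [n]
        _ ≤ ∑ v, f v := Finset.sum_le_sum (fun v _ => this v)
    -- romanDom G ≤ n - 1 via v0 with two neighbors
    have hv01 : v0 ≠ u1 := by intro h; subst h; exact absurd hu1 (by simp)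
    have hv02 : v0 ≠ u2 := by intro h; subst h; exact absurd hu2 (by simp)
    set g : V → ℕ := fun v => if v = u1 ∨ v = u2 then 0 else if v = v0 then 2 else 1 with hg
    have hgrdf : IsRDF G g := by
      constructor
      · intro v; simp only [hg]; split; omega; split <;> omega
      · intro v hv
        refine ⟨v0, ?_, ?_⟩
        · have : v = u1 ∨ v = u2 := by
            by_contra h
            simp only [hg, if_neg h] at hv
            split at hv <;> omega
          rcases this with rfl | rfl
          · exact hu1.symm
          · exact hu2.symm
        · simp [hg, hv01, hv02]
    have hup : romanDom G ≤ ∑ v, g v := Nat.sInf_le ⟨g, hgrdf, rfl⟩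
    have hsumg : ∑ v, g v < n := by
      set s : Finset V := {u1, u2, v0} with hs
      have hcs : s.card = 3 := by
        rw [hs]
        rw [Finset.card_insert_of_notMem (by simp [hu12, hv01.symm]),
            Finset.card_insert_of_notMem (by simp [hv02.symm])]
        simp
      have hsplit : ∑ v, g v = ∑ v ∈ s, g v + ∑ v ∈ sᶜ, g v := by
        rw [Finset.sum_add_sum_compl]
      have h1 : ∑ v ∈ s, g v = 2 := by
        rw [hs, Finset.sum_insert (by simp [hu12, hv01.symm]),
            Finset.sum_insert (by simp [hv02.symm]), Finset.sum_singleton]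
        simp [hg, hu12, hv01, hv02, hv01.symm, hv02.symm]
      have h2' : ∑ v ∈ sᶜ, g v = n - 3 := by
        have : ∀ v ∈ sᶜ, g v = 1 := by
          intro v hv
          simp only [hs, Finset.mem_compl, Finset.mem_insert, Finset.mem_singleton, not_or] at hv
          simp [hg, hv.1, hv.2.1, hv.2.2]
        rw [Finset.sum_congr rfl this, Finset.sum_const, smul_eq_mul, mul_one,
            Finset.card_compl, hcs]
      have hn3 : 3 ≤ n := by
        calc 3 = s.card := hcs.symm
          _ ≤ Finset.univ.card := Finset.card_le_univ s
          _ = n := rfl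
      omega
    omega
  -- every element of the bondage set is ≥ minDeg G
  have hall : ∀ k ∈ {k | ∃ B : Set (Sym2 V), B ⊆ G.edgeSet ∧
      romanDom (G.deleteEdges B) > romanDom G ∧ B.ncard = k}, minDeg G ≤ k := by
    rintro k ⟨B, hBsub, hBinc, rfl⟩
    by_contra h
    push_neg at h
    -- G.deleteEdges B has no isolated vertex
    have hniso' : ∀ v : V, ∃ u, (G.deleteEdges B).Adj v u := by
      intro v
      by_contra hno
      push_neg at hno
      have hmap : ∀ u ∈ G.neighborSet v, s(v, u) ∈ B := by
        intro u hu
        by_contra hnB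
        exact hno u (SimpleGraph.deleteEdges_adj.2 ⟨hu, hnB⟩)
      have hinj : Set.InjOn (fun u => s(v, u)) (G.neighborSet v) := by
        intro a ha b hb hab
        simp only [Sym2.eq, Sym2.rel_iff', Prod.mk.injEq, Prod.swap_prod_mk] at hab
        rcases hab with ⟨-, h⟩ | ⟨h1, h2⟩
        · exact h
        · subst h2; exact absurd ha (by simp)
      have hle : deg G v ≤ B.ncard :=
        Set.ncard_le_ncard_of_injOn _ hmap hinj (Set.toFinite B)
      have := minDeg_le_deg G v
      omega
    have : romanDom (G.deleteEdges B) ≤ romanDom G := by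
      calc romanDom (G.deleteEdges B) ≤ 2 * vcNum (G.deleteEdges B) :=
            rdf_le_two_vc _ hniso'
        _ ≤ 2 * vcNum G := by have := vc_delete_le G B; omega
        _ = romanDom G := hβ.symm
    omega
  exact hall _ (Nat.sInf_mem hTne)
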